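/- Let w be a k-uniform word and let w' be any cyclic shift (rotation) of w, i.e., w' = v u where w = u v for some factorization of w into words u and v. Then the alternating symbol graphs satisfy G(w') = G(w): two letters alternate in w' if and only if they alternate in w. -/

import Mathlib

/-- The residWord word `w_{a,b}`: `w` with all letters other than `a`, `b` deleted. -/
def residWord (w : List ℕ) (a b : ℕ) : List ℕ :=
  w.filter (fun c => c = a ∨ c = b)

/-- Letters `a` and `b` alternate in `w`: no two consecutive letters of `w_{a,b}` are equal. -/
def Alternates (w : List ℕ) (a b : ℕ) : Prop :=
  (residWord w a b).Chain' (· ≠ ·)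

theorem residual_comm (w : List ℕ) (a b : ℕ) : residWord w a b = residWord w b a := by
  unfold residWord
  apply List.filter_congr
  intro x _
  exact decide_eq_decide.mpr or_comm

/-- The alternating symbol graph `G(w)`: distinct letters `a`, `b` are adjacent iff
both occur in `w` and alternate in `w`. -/
def altGraph (w : List ℕ) : SimpleGraph ℕ where
  Adj a b := a ≠ b ∧ a ∈ w ∧ b ∈ w ∧ Alternates w a b
  symm := by
    constructor
    rintro a b ⟨h1, h2, h3, h4⟩
    refine ⟨h1.symm, h3, h2, ?_⟩
    unfold Alternates
    rw [residual_comm]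
    exact h4
  loopless := by
    constructor
    rintro a ⟨h1, -⟩
    exact h1 rfl

/-- The cycle graph `Cₙ` on vertices `{1, …, n}` (as a graph on `ℕ`):
`k` is adjacent to `k+1` for `1 ≤ k ≤ n-1`, and `n` is adjacent to `1`. -/
def cycleGraph (n : ℕ) : SimpleGraph ℕ where
  Adj a b := a ≠ b ∧ 1 ≤ a ∧ a ≤ n ∧ 1 ≤ b ∧ b ≤ n ∧
    (b = a + 1 ∨ a = b + 1 ∨ (a = 1 ∧ b = n) ∨ (b = 1 ∧ a = n))
  symm := by
    constructor
    rintro a b ⟨h1, h2, h3, h4, h5, h6⟩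
    exact ⟨h1.symm, h4, h5, h2, h3, by tauto⟩
  loopless := by
    constructor
    rintro a ⟨h1, -⟩
    exact h1 rfl

/-- A word is `k`-uniform if every letter occurring in it occurs exactly `k` times. -/
def IsUniform (w : List ℕ) (k : ℕ) : Prop := ∀ a ∈ w, w.count a = k

/-- The word `wₙ = 1 n 2 1 3 2 4 3 5 4 … (n-1)(n-2) n (n-1)`. -/
def wn (n : ℕ) : List ℕ :=
  [1, n] ++ (List.range (n - 1)).flatMap (fun k => [k + 2, k + 1])


/-- In a constant list, chain' of ≠ holds iff length ≤ 1. -/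
lemma chain'_of_const {b : ℕ} : ∀ {t : List ℕ}, (∀ c ∈ t, c = b) →
    (t.Chain' (· ≠ ·) ↔ t.length ≤ 1)
  | [], _ => by simp [List.Chain']
  | [x], _ => by simp [List.Chain']
  | x :: y :: r, h => by
    simp only [List.Chain', List.isChain_cons_cons, List.length_cons]
    constructor
    · rintro ⟨hxy, -⟩
      exact absurd ((h x (by simp)).trans (h y (by simp)).symm) hxy
    · omega

/-- End letters and counts of an alternating word over `{a, b}`. -/
lemma alt_ends_count (a b : ℕ) (hab : a ≠ b) : ∀ t : List ℕ, t.Chain' (· ≠ ·) →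
    (∀ c ∈ t, c = a ∨ c = b) →
    t = [] ∨
    (t.head? = some a ∧ t.getLast? = some a ∧ t.count a = t.count b + 1) ∨
    (t.head? = some b ∧ t.getLast? = some b ∧ t.count b = t.count a + 1) ∨
    (t.head? = some a ∧ t.getLast? = some b ∧ t.count a = t.count b) ∨
    (t.head? = some b ∧ t.getLast? = some a ∧ t.count a = t.count b)
  | [], _, _ => Or.inl rfl
  | [x], _, hm => by
    rcases hm x (by simp) with rfl | rfl
    · refine Or.inr (Or.inl ?_)
      simp [List.count_cons, hab, Ne.symm hab]
    · refine Or.inr (Or.inr (Or.inl ?_))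
      simp [List.count_cons, hab, Ne.symm hab]
  | x :: y :: r, hc, hm => by
    simp only [List.Chain', List.isChain_cons_cons] at hc
    have ih := alt_ends_count a b hab (y :: r) hc.2 (fun c hcm => hm c (List.mem_cons_of_mem _ hcm))
    have hlast : (x :: y :: r).getLast? = (y :: r).getLast? := by
      rw [show x :: y :: r = [x] ++ (y :: r) from rfl]
      exact List.getLast?_append_of_ne_nil _ (by simp)
    have hx := hm x (by simp)
    have hcx : ∀ z, (x :: y :: r).count z = (y :: r).count z + (if x = z then 1 else 0) := by
      intro z; simp [List.count_cons]
    rcases ih with h0 | ⟨h1, h2, h3⟩ | ⟨h1, h2, h3⟩ | ⟨h1, h2, h3⟩ | ⟨h1, h2, h3⟩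
    · simp at h0
    · -- rest starts with a and ends with a; x ≠ y = a so x = b
      have hy : y = a := by simpa using h1
      have hxb : x = b := by
        rcases hx with h' | h'
        · exact absurd (h'.trans hy.symm) hc.1
        · exact h'
      refine Or.inr (Or.inr (Or.inr (Or.inr ⟨by simp [hxb], by rw [hlast]; exact h2, ?_⟩)))
      rw [hcx a, hcx b]; simp [hxb, hab, Ne.symm hab]; omega
    · have hy : y = b := by simpa using h1
      have hxa : x = a := by
        rcases hx with h' | h'
        · exact h'
        · exact absurd (h'.trans hy.symm) hc.1
      refine Or.inr (Or.inr (Or.inr (Or.inl ⟨by simp [hxa], by rw [hlast]; exact h2, ?_⟩)))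
      rw [hcx a, hcx b]; simp [hxa, hab, Ne.symm hab]; omega
    · have hy : y = a := by simpa using h1
      have hxb : x = b := by
        rcases hx with h' | h'
        · exact absurd (h'.trans hy.symm) hc.1
        · exact h'
      refine Or.inr (Or.inr (Or.inl ⟨by simp [hxb], by rw [hlast]; exact h2, ?_⟩))
      rw [hcx a, hcx b]; simp [hxb, hab, Ne.symm hab]; omega
    · have hy : y = b := by simpa using h1
      have hxa : x = a := by
        rcases hx with h' | h'
        · exact h'
        · exact absurd (h'.trans hy.symm) hc.1
      refine Or.inr (Or.inl ⟨by simp [hxa], by rw [hlast]; exact h2, ?_⟩)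
      rw [hcx a, hcx b]; simp [hxa, hab, Ne.symm hab]; omega

/-- Rotation preserves the alternation property for balanced two-letter words. -/
lemma chain'_rotate (a b : ℕ) (r s : List ℕ)
    (hm : ∀ c ∈ r ++ s, c = a ∨ c = b)
    (hcount : (r ++ s).count a = (r ++ s).count b)
    (hc : (r ++ s).Chain' (· ≠ ·)) : (s ++ r).Chain' (· ≠ ·) := by
  rcases eq_or_ne r [] with rfl | hr
  · simpa using hc
  rcases eq_or_ne s [] with rfl | hs
  · simpa using hc
  rcases eq_or_ne a b with rfl | hab
  · -- all letters equal a; r ++ s has length ≥ 2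
    have hconst : ∀ c ∈ r ++ s, c = a := by intro c hcm; rcases hm c hcm with h | h <;> exact h
    have := (chain'_of_const hconst).mp hc
    rw [List.length_append] at this
    have := List.length_pos_iff.mpr hr
    have := List.length_pos_iff.mpr hs
    omega
  have key := alt_ends_count a b hab (r ++ s) hc hm
  have hne : r ++ s ≠ [] := by simp [hr]
  have hhead : (r ++ s).head? = r.head? := by
    cases r with | nil => exact absurd rfl hr | cons x t => simp
  have hlast : (r ++ s).getLast? = s.getLast? := List.getLast?_append_of_ne_nil _ hs
  simp only [List.Chain', List.isChain_append] at hc ⊢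
  refine ⟨hc.2.1, hc.1, ?_⟩
  intro x hxl y hyh
  rcases key with h0 | ⟨-, -, h3⟩ | ⟨-, -, h3⟩ | ⟨h1, h2, -⟩ | ⟨h1, h2, -⟩
  · exact absurd h0 hne
  · omega
  · omega
  · rw [hlast] at h2; rw [hhead] at h1
    rw [h2] at hxl; rw [h1] at hyh
    simp at hxl hyh; omega
  · rw [hlast] at h2; rw [hhead] at h1
    rw [h2] at hxl; rw [h1] at hyh
    simp at hxl hyh; omega

lemma alternates_rotate (k : ℕ) (u v : List ℕ) (h : IsUniform (u ++ v) k) (a b : ℕ) :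
    Alternates (v ++ u) a b ↔ Alternates (u ++ v) a b := by
  set r := u.filter (fun c => c = a ∨ c = b) with hrdef
  set s := v.filter (fun c => c = a ∨ c = b) with hsdef
  have hres1 : residWord (u ++ v) a b = r ++ s := List.filter_append _ _
  have hres2 : residWord (v ++ u) a b = s ++ r := List.filter_append _ _
  have hmem : ∀ c ∈ r ++ s, c = a ∨ c = b := by
    intro c hc
    rcases List.mem_append.mp hc with h' | h' <;>
      simpa using (List.mem_filter.mp h').2
  have hmem' : ∀ c ∈ s ++ r, c = a ∨ c = b := by
    intro c hc; apply hmem; rw [List.mem_append] at hc ⊢; tauto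
  have hcnt : ∀ z : ℕ, (r ++ s).count z = (s ++ r).count z := by
    intro z; simp [List.count_append]; omega
  -- counts of a and b in the residual word
  have hca : (r ++ s).count a = (u ++ v).count a := by
    rw [← hres1]; exact List.count_filter (by simp)
  have hcb : (r ++ s).count b = (u ++ v).count b := by
    rw [← hres1]; exact List.count_filter (by simp)
  unfold Alternates
  rw [hres1, hres2]
  by_cases hA : a ∈ u ++ v
  · by_cases hB : b ∈ u ++ v
    · have hcount : (r ++ s).count a = (r ++ s).count b := by
        rw [hca, hcb, h a hA, h b hB]
      constructor
      · intro hc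
        have := chain'_rotate a b s r hmem' (by rw [← hcnt a, ← hcnt b]; exact hcount) hc
        simpa using this
      · exact chain'_rotate a b r s hmem hcount
    · -- b does not occur: residual is constant = a
      have hb0 : (r ++ s).count b = 0 := by
        rw [hcb]; exact List.count_eq_zero.mpr hB
      have hconst : ∀ c ∈ r ++ s, c = a := by
        intro c hc
        rcases hmem c hc with h' | h'
        · exact h'
        · exact absurd hc (List.count_eq_zero.mp (h' ▸ hb0))
      have hconst' : ∀ c ∈ s ++ r, c = a := by
        intro c hc; apply hconst; rw [List.mem_append] at hc ⊢; tauto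
      rw [chain'_of_const hconst, chain'_of_const hconst']
      simp [List.length_append]; omega
  · -- a does not occur: residual is constant = b
    have ha0 : (r ++ s).count a = 0 := by
      rw [hca]; exact List.count_eq_zero.mpr hA
    have hconst : ∀ c ∈ r ++ s, c = b := by
      intro c hc
      rcases hmem c hc with h' | h'
      · exact absurd hc (List.count_eq_zero.mp (h' ▸ ha0))
      · exact h'
    have hconst' : ∀ c ∈ s ++ r, c = b := by
      intro c hc; apply hconst; rw [List.mem_append] at hc ⊢; tauto
    rw [chain'_of_const hconst, chain'_of_const hconst']
    simp [List.length_append]; omega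

/-- If `w = u ++ v` is `k`-uniform, then the cyclic shift `w' = v ++ u`
represents the same graph: `G(w') = G(w)`, and two letters alternate in `w'` iff they
alternate in `w`. -/
theorem altGraph_rotate (k : ℕ) (u v : List ℕ) (h : IsUniform (u ++ v) k) :
    altGraph (v ++ u) = altGraph (u ++ v) ∧
    ∀ a b : ℕ, (Alternates (v ++ u) a b ↔ Alternates (u ++ v) a b) := by
  refine ⟨?_, alternates_rotate k u v h⟩
  ext a b
  show (a ≠ b ∧ a ∈ v ++ u ∧ b ∈ v ++ u ∧ Alternates (v ++ u) a b) ↔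
    (a ≠ b ∧ a ∈ u ++ v ∧ b ∈ u ++ v ∧ Alternates (u ++ v) a b)
  rw [alternates_rotate k u v h a b]
  simp only [List.mem_append]
  tauto
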